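/- Let A₁ := −(μ−r)²/(2σ²) − a²η²/(2b²), and let P₂(t) := e^{(2A₁+2r)(T−t)}, Q₂(t) := g₁(t)e^{(2A₁+r)(T−t)}, R₂(t) := ½e^{2A₁(T−t)}g₁(t)² for t ∈ [0,T]. Then (P₂,Q₂,R₂) solves the terminal-value ODE system Ṗ₂(t) + (2r + 2A₁)P₂(t) = 0 with P₂(T) = 1, Q̇₂(t) + (r + 2A₁)Q₂(t) + f·P₂(t) = 0 with Q₂(T) = 0, and Ṙ₂(t) + A₁Q₂(t)²/P₂(t) + f·Q₂(t) = 0 with R₂(T) = 0, on [0,T]. Moreover, for all t ∈ [0,T] and x ∈ ℝ one has ½P₂(t)x² + Q₂(t)x + R₂(t) = ½e^{2A₁(T−t)}(e^{r(T−t)}x + g₁(t))². -/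

import Mathlib

open Real Set

/-- (P₂,Q₂,R₂) solves the terminal-value ODE system and the
completed-square identity holds. -/
theorem stmt_1
    (T r μ σ a b η θ d γ : ℝ)
    (hT : 0 < T) (hr : 0 < r) (hσ : 0 < σ) (ha : 0 < a) (hb : 0 < b)
    (hη : 0 < η) (hμr : r < μ)
    (f : ℝ) (hf : f = a * θ - a * η + (d - γ) * r)
    (A₁ : ℝ) (hA₁ : A₁ = -(μ - r) ^ 2 / (2 * σ ^ 2) - a ^ 2 * η ^ 2 / (2 * b ^ 2))
    (g₁ P₂ Q₂ R₂ : ℝ → ℝ)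
    (hg₁ : ∀ t, g₁ t = f * (exp (r * (T - t)) - 1) / r)
    (hP₂ : ∀ t, P₂ t = exp ((2 * A₁ + 2 * r) * (T - t)))
    (hQ₂ : ∀ t, Q₂ t = g₁ t * exp ((2 * A₁ + r) * (T - t)))
    (hR₂ : ∀ t, R₂ t = (1 / 2) * exp (2 * A₁ * (T - t)) * (g₁ t) ^ 2) :
    (∀ t ∈ Icc (0 : ℝ) T, HasDerivAt P₂ (-((2 * r + 2 * A₁) * P₂ t)) t) ∧ P₂ T = 1 ∧
    (∀ t ∈ Icc (0 : ℝ) T, HasDerivAt Q₂ (-((r + 2 * A₁) * Q₂ t + f * P₂ t)) t) ∧ Q₂ T = 0 ∧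
    (∀ t ∈ Icc (0 : ℝ) T,
      HasDerivAt R₂ (-(A₁ * (Q₂ t) ^ 2 / P₂ t + f * Q₂ t)) t) ∧ R₂ T = 0 ∧
    (∀ t ∈ Icc (0 : ℝ) T, ∀ x : ℝ,
      (1 / 2) * P₂ t * x ^ 2 + Q₂ t * x + R₂ t
        = (1 / 2) * exp (2 * A₁ * (T - t)) * (exp (r * (T - t)) * x + g₁ t) ^ 2) := by
  have hg₁' : g₁ = fun t => f * (exp (r * (T - t)) - 1) / r := funext hg₁
  have hP₂' : P₂ = fun t => exp ((2 * A₁ + 2 * r) * (T - t)) := funext hP₂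
  have hQ₂' : Q₂ = fun t => g₁ t * exp ((2 * A₁ + r) * (T - t)) := funext hQ₂
  have hR₂' : R₂ = fun t => (1 / 2) * exp (2 * A₁ * (T - t)) * (g₁ t) ^ 2 := funext hR₂
  subst hQ₂' hR₂' hg₁' hP₂'
  have key : ∀ (c t : ℝ), HasDerivAt (fun t => exp (c * (T - t)))
      (-(c * exp (c * (T - t)))) t := by
    intro c t
    have h : HasDerivAt (fun t : ℝ => c * (T - t)) (c * (-1)) t :=
      ((hasDerivAt_id t).const_sub T).const_mul c
    simpa [mul_comm] using h.exp
  have keyg : ∀ t : ℝ, HasDerivAt (fun t => f * (exp (r * (T - t)) - 1) / r)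
      (-(f * exp (r * (T - t)))) t := by
    intro t
    have h := (((key r t).sub_const 1).const_mul f).div_const r
    refine h.congr_deriv ?_
    field_simp
  refine ⟨?_, by simp, ?_, by simp, ?_, by simp, ?_⟩
  · intro t _
    have := key (2 * A₁ + 2 * r) t
    convert this using 1
    ring
  · intro t _
    have h := (keyg t).mul (key (2 * A₁ + r) t)
    refine h.congr_deriv ?_
    have e3 : exp ((2 * A₁ + 2 * r) * (T - t))
        = exp (r * (T - t)) * exp ((2 * A₁ + r) * (T - t)) := by
      rw [← exp_add]; ring_nf
    simp only [e3]
    field_simp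
    ring
  · intro t _
    have h := ((key (2 * A₁) t).const_mul (1 / 2 : ℝ)).mul ((keyg t).pow 2)
    refine h.congr_deriv ?_
    have e1 : exp ((2 * A₁ + 2 * r) * (T - t))
        = exp (2 * A₁ * (T - t)) * exp (r * (T - t)) ^ 2 := by
      rw [sq, ← exp_add, ← exp_add]; ring_nf
    have e2 : exp ((2 * A₁ + r) * (T - t))
        = exp (2 * A₁ * (T - t)) * exp (r * (T - t)) := by
      rw [← exp_add]; ring_nf
    simp only [e1, e2, Pi.pow_apply, show (2:ℕ) - 1 = 1 from rfl, pow_one, Nat.cast_ofNat]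
    field_simp
    ring
  · intro t _ x
    have e1 : exp ((2 * A₁ + 2 * r) * (T - t))
        = exp (2 * A₁ * (T - t)) * exp (r * (T - t)) ^ 2 := by
      rw [sq, ← exp_add, ← exp_add]; ring_nf
    have e2 : exp ((2 * A₁ + r) * (T - t))
        = exp (2 * A₁ * (T - t)) * exp (r * (T - t)) := by
      rw [← exp_add]; ring_nf
    simp only [e1, e2]
    ring
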